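/- A smooth function f ∈ S(ℝ) (Schwartz class) satisfies the ODE (1 − q²) f(q) = q f′(q) if and only if f(q) = c · q e^{−q²/2} for some constant c. -/

import Mathlib

noncomputable section

open Complex Set Filter Topology

lemma hasDerivAt_coe (q : ℝ) : HasDerivAt (fun x : ℝ => (x : ℂ)) 1 q := by
  have h := (hasDerivAt_id q).ofReal_comp
  refine h.congr_deriv ?_
  simp

lemma eq_linear {F : ℝ → ℂ} (hd : Differentiable ℝ F)
    (hF : ∀ q : ℝ, F q = (q : ℂ) * deriv F q) : ∀ q : ℝ, F q = deriv F 0 * q := by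
  have hF0 : F 0 = 0 := by simpa using hF 0
  set c := deriv F 0 with hc
  -- H = F x / x has derivative 0 away from 0
  set H : ℝ → ℂ := fun x => F x * ((x : ℂ))⁻¹ with hH_def
  have hH : ∀ q : ℝ, q ≠ 0 → HasDerivAt H 0 q := by
    intro q hq
    have hq' : (q : ℂ) ≠ 0 := Complex.ofReal_ne_zero.2 hq
    have h2 : HasDerivAt (fun x : ℝ => ((x : ℂ))⁻¹) (-((q : ℂ) ^ 2)⁻¹) q :=
      (hasDerivAt_inv hq').comp_ofReal
    have h3 := (hd q).hasDerivAt.mul h2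
    refine h3.congr_deriv ?_
    rw [hF q]
    field_simp
    ring
  have hslope : ∀ x : ℝ, x ≠ 0 → slope F 0 x = H x := by
    intro x hx
    simp only [slope_def_module, hF0, sub_zero, hH_def]
    rw [Complex.real_smul]
    push_cast
    ring
  have htends : Tendsto (slope F 0) (𝓝[≠] (0:ℝ)) (𝓝 c) :=
    hasDerivAt_iff_tendsto_slope.1 (hd 0).hasDerivAt
  -- On each side H is constant
  have hconst : ∀ s : Set ℝ, Convex ℝ s → IsOpen s → (0 : ℝ) ∉ s →
      ∀ a ∈ s, ∀ b ∈ s, H a = H b := by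
    intro s hconv hopen h0 a ha b hb
    refine hconv.is_const_of_fderivWithin_eq_zero
      (fun x hx => ((hH x (fun h => h0 (h ▸ hx))).differentiableAt).differentiableWithinAt)
      (fun x hx => ?_) ha hb
    rw [fderivWithin_of_isOpen hopen hx]
    rw [(hH x (fun h => h0 (h ▸ hx))).hasFDerivAt.fderiv]
    ext y
    simp
  have key : ∀ q : ℝ, q ≠ 0 → H q = c := by
    intro q hq
    rcases hq.lt_or_gt with hq | hq
    · -- q < 0, use left limit
      have h1 : Tendsto (slope F 0) (𝓝[<] (0:ℝ)) (𝓝 (H q)) := by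
        apply tendsto_const_nhds.congr'
        filter_upwards [self_mem_nhdsWithin] with x hx
        rw [hslope x (ne_of_lt hx)]
        exact hconst (Iio 0) (convex_Iio 0) isOpen_Iio (by simp) q hq x hx
      have h2 : Tendsto (slope F 0) (𝓝[<] (0:ℝ)) (𝓝 c) :=
        htends.mono_left (nhdsWithin_mono 0 (fun x hx => ne_of_lt hx))
      exact tendsto_nhds_unique h1 h2
    · have h1 : Tendsto (slope F 0) (𝓝[>] (0:ℝ)) (𝓝 (H q)) := by
        apply tendsto_const_nhds.congr'
        filter_upwards [self_mem_nhdsWithin] with x hx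
        rw [hslope x (ne_of_gt hx)]
        exact hconst (Ioi 0) (convex_Ioi 0) isOpen_Ioi (by simp) q hq x hx
      have h2 : Tendsto (slope F 0) (𝓝[>] (0:ℝ)) (𝓝 c) :=
        htends.mono_left (nhdsWithin_mono 0 (fun x hx => ne_of_gt hx))
      exact tendsto_nhds_unique h1 h2
  intro q
  rcases eq_or_ne q 0 with rfl | hq
  · simp [hF0]
  · have hq' : (q : ℂ) ≠ 0 := Complex.ofReal_ne_zero.2 hq
    have := key q hq
    rw [hH_def] at this
    field_simp at this
    linear_combination this

theorem schwartz_ode_solution (f : SchwartzMap ℝ ℂ) :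
    (∀ q : ℝ, ((1 : ℂ) - (q : ℂ) ^ 2) * f q = (q : ℂ) * deriv (⇑f) q) ↔
    (∃ c : ℂ, ∀ q : ℝ, f q = c * (q : ℂ) * Real.exp (-q ^ 2 / 2)) := by
  have hexp : ∀ q : ℝ, HasDerivAt (fun x : ℝ => Complex.exp ((x : ℂ) ^ 2 / 2))
      (Complex.exp ((q : ℂ) ^ 2 / 2) * q) q := by
    intro q
    have h1 : HasDerivAt (fun x : ℝ => (x : ℂ) ^ 2 / 2) (q : ℂ) q := by
      have h := ((hasDerivAt_coe q).mul (hasDerivAt_coe q)).div_const 2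
      simp only [pow_two]
      refine h.congr_deriv ?_
      push_cast; ring
    simpa using h1.cexp
  constructor
  · intro hode
    set F : ℝ → ℂ := fun x => f x * Complex.exp ((x : ℂ) ^ 2 / 2) with hF_def
    have hder : ∀ q : ℝ, HasDerivAt F
        ((deriv (⇑f) q + f q * q) * Complex.exp ((q : ℂ) ^ 2 / 2)) q := by
      intro q
      have := (f.differentiable.differentiableAt (x := q)).hasDerivAt.mul (hexp q)
      refine this.congr_deriv ?_
      ring
    have hd : Differentiable ℝ F := fun q => (hder q).differentiableAt
    have hF : ∀ q : ℝ, F q = (q : ℂ) * deriv F q := by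
      intro q
      rw [(hder q).deriv, hF_def]
      have h := hode q
      simp only
      linear_combination Complex.exp ((q : ℂ) ^ 2 / 2) * h
    have hlin := eq_linear hd hF
    refine ⟨deriv F 0, fun q => ?_⟩
    have := hlin q
    rw [hF_def] at this
    simp only at this
    have hrw : (Real.exp (-q ^ 2 / 2) : ℂ) = Complex.exp (-(q : ℂ) ^ 2 / 2) := by
      rw [Complex.ofReal_exp]; push_cast; ring_nf
    rw [hrw]
    have hne : Complex.exp ((q : ℂ) ^ 2 / 2) ≠ 0 := Complex.exp_ne_zero _
    have hprod : Complex.exp ((q : ℂ) ^ 2 / 2) * Complex.exp (-(q : ℂ) ^ 2 / 2) = 1 := by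
      rw [← Complex.exp_add]; ring_nf; exact Complex.exp_zero
    calc f q = f q * Complex.exp ((q : ℂ) ^ 2 / 2) * Complex.exp (-(q : ℂ) ^ 2 / 2) := by
          rw [mul_assoc, hprod, mul_one]
      _ = deriv F 0 * q * Complex.exp (-(q : ℂ) ^ 2 / 2) := by rw [this]
  · rintro ⟨c, hc⟩ q
    have hfe : ⇑f = fun x : ℝ => c * (x : ℂ) * Complex.exp (-(x : ℂ) ^ 2 / 2) := by
      funext x
      rw [hc x, Complex.ofReal_exp]
      push_cast; ring_nf
    have hmodel : HasDerivAt (fun x : ℝ => c * (x : ℂ) * Complex.exp (-(x : ℂ) ^ 2 / 2))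
        (c * (1 - (q : ℂ) ^ 2) * Complex.exp (-(q : ℂ) ^ 2 / 2)) q := by
      have h1 : HasDerivAt (fun x : ℝ => -(x : ℂ) ^ 2 / 2) (-(q : ℂ)) q := by
        have h := (((hasDerivAt_coe q).mul (hasDerivAt_coe q)).neg).div_const 2
        simp only [pow_two]
        refine h.congr_deriv ?_
        push_cast; ring
      have h2 := ((hasDerivAt_coe q).const_mul c).mul h1.cexp
      refine h2.congr_deriv ?_
      ring
    rw [hfe, hmodel.deriv]
    simp only
    ring
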